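/- Consider the graph H with vertices v₀, v₁, v₂, v₃, v and edges v₀v₁, v₁v₂, v₂v₃, v₁v, v₂v, together with a list assignment L where |L(v₁v₂)| ≥ 4, |L(v₁v)|, |L(v₂v)| ≥ 3, and |L(v₀v₁)|, |L(v₂v₃)| ≥ 2. Then H has a proper edge colouring from the lists. -/
import Mathlib


/-- A proper edge colouring of `G` from the lists `L`: every edge of `G` receives a colour
from its list, and edges sharing a vertex receive distinct colours. -/
def IsListEdgeColoring {V : Type*} (G : SimpleGraph V) (L : Sym2 V → Finset ℕ)
    (C : Sym2 V → ℕ) : Prop :=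
  (∀ e ∈ G.edgeSet, C e ∈ L e) ∧
  ∀ e ∈ G.edgeSet, ∀ f ∈ G.edgeSet, e ≠ f → (∃ v, v ∈ e ∧ v ∈ f) → C e ≠ C f

/-- The graph with vertices `v₀ = 0, v₁ = 1, v₂ = 2, v₃ = 3, v = 4` and edges
`v₀v₁, v₁v₂, v₂v₃, v₁v, v₂v`: a triangle `v₁v₂v` with pendant edges at `v₁` and `v₂`. -/
def configGraphHalin : SimpleGraph (Fin 5) :=
  SimpleGraph.fromEdgeSet {s(0, 1), s(1, 2), s(2, 3), s(1, 4), s(2, 4)}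

/-- The configuration arising in the proof that Halin graphs of maximum degree at least 4
are `Δ`-edge-choosable: if `|L(v₁v₂)| ≥ 4`, `|L(v₁v)|, |L(v₂v)| ≥ 3` and
`|L(v₀v₁)|, |L(v₂v₃)| ≥ 2`, then the graph has an edge colouring from the lists. -/
theorem config_halin_list_edge_coloring (L : Sym2 (Fin 5) → Finset ℕ)
    (h12 : 4 ≤ (L s(1, 2)).card)
    (h1v : 3 ≤ (L s(1, 4)).card) (h2v : 3 ≤ (L s(2, 4)).card)
    (h01 : 2 ≤ (L s(0, 1)).card) (h23 : 2 ≤ (L s(2, 3)).card) :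
    ∃ C, IsListEdgeColoring configGraphHalin L C := by
  -- shrink the pendant lists to size exactly 2
  obtain ⟨L01, hL01sub, hL01card⟩ := Finset.exists_subset_card_eq h01
  obtain ⟨L23, hL23sub, hL23card⟩ := Finset.exists_subset_card_eq h23
  -- pick c14 ∈ L(1,4) \ L01
  have h14 : (L s(1, 4) \ L01).Nonempty := by
    rw [← Finset.card_pos]
    have := Finset.card_le_card_sdiff_add_card (s := L s(1, 4)) (t := L01)
    omega
  obtain ⟨c14, hc14⟩ := h14
  rw [Finset.mem_sdiff] at hc14
  -- pick c24 ∈ L(2,4) \ {c14}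
  have h24 : (L s(2, 4) \ {c14}).Nonempty := by
    rw [← Finset.card_pos]
    have := Finset.card_le_card_sdiff_add_card (s := L s(2, 4)) (t := ({c14} : Finset ℕ))
    simp only [Finset.card_singleton] at this
    omega
  obtain ⟨c24, hc24⟩ := h24
  rw [Finset.mem_sdiff, Finset.mem_singleton] at hc24
  -- pick c23 ∈ L23 \ {c24}
  have h23' : (L23 \ {c24}).Nonempty := by
    rw [← Finset.card_pos]
    have := Finset.card_le_card_sdiff_add_card (s := L23) (t := ({c24} : Finset ℕ))
    simp only [Finset.card_singleton] at this
    omega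
  obtain ⟨c23, hc23⟩ := h23'
  rw [Finset.mem_sdiff, Finset.mem_singleton] at hc23
  -- pick c12 ∈ L(1,2) \ {c14, c24, c23}
  have h12' : (L s(1, 2) \ {c14, c24, c23}).Nonempty := by
    rw [← Finset.card_pos]
    have h3 : ({c14, c24, c23} : Finset ℕ).card ≤ 3 := by
      apply le_trans (Finset.card_insert_le _ _)
      have := Finset.card_insert_le c24 ({c23} : Finset ℕ)
      simp only [Finset.card_singleton] at this ⊢
      omega
    have := Finset.card_le_card_sdiff_add_card (s := L s(1, 2))
      (t := ({c14, c24, c23} : Finset ℕ))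
    omega
  obtain ⟨c12, hc12⟩ := h12'
  rw [Finset.mem_sdiff, Finset.mem_insert, Finset.mem_insert, Finset.mem_singleton] at hc12
  push_neg at hc12
  -- pick c01 ∈ L01 \ {c12}
  have h01' : (L01 \ {c12}).Nonempty := by
    rw [← Finset.card_pos]
    have := Finset.card_le_card_sdiff_add_card (s := L01) (t := ({c12} : Finset ℕ))
    simp only [Finset.card_singleton] at this
    omega
  obtain ⟨c01, hc01⟩ := h01'
  rw [Finset.mem_sdiff, Finset.mem_singleton] at hc01
  have hc01c14 : c01 ≠ c14 := fun h => hc14.2 (h ▸ hc01.1)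
  -- the colouring
  refine ⟨fun e =>
    if e = s(0, 1) then c01 else
    if e = s(1, 2) then c12 else
    if e = s(2, 3) then c23 else
    if e = s(1, 4) then c14 else
    if e = s(2, 4) then c24 else 0, ?_, ?_⟩
  · intro e he
    rw [configGraphHalin, SimpleGraph.edgeSet_fromEdgeSet, Set.mem_diff,
      Set.mem_insert_iff, Set.mem_insert_iff, Set.mem_insert_iff, Set.mem_insert_iff,
      Set.mem_singleton_iff] at he
    rcases he.1 with h | h | h | h | h <;> subst h
    · exact hL01sub hc01.1
    · exact hc12.1
    · exact hL23sub hc23.1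
    · exact hc14.1
    · exact hc24.1
  · intro e he f hf hne hshare
    rw [configGraphHalin, SimpleGraph.edgeSet_fromEdgeSet, Set.mem_diff,
      Set.mem_insert_iff, Set.mem_insert_iff, Set.mem_insert_iff, Set.mem_insert_iff,
      Set.mem_singleton_iff] at he hf
    rcases he.1 with h | h | h | h | h <;> subst h <;>
      rcases hf.1 with h | h | h | h | h <;> subst h <;>
      first
      | exact absurd rfl hne
      | exact hc01.2
      | exact fun h => hc01.2 h.symm
      | exact hc01c14
      | exact fun h => hc01c14 h.symm
      | exact hc12.2.1
      | exact fun h => hc12.2.1 h.symm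
      | exact hc12.2.2.1
      | exact fun h => hc12.2.2.1 h.symm
      | exact hc12.2.2.2
      | exact fun h => hc12.2.2.2 h.symm
      | exact fun h => hc23.2 h.symm
      | exact hc23.2
      | exact hc24.2
      | exact fun h => hc24.2 h.symm
      | exact absurd hshare (by decide)
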